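/- For every positive integer n, every real σ with 0 < σ < 1/2, and every real t, one has (1 + 1/(2n))^(1-2σ) > (2n+1-σ)/(2n+σ) ≥ sqrt(((2n+1-σ)² + t²)/((2n+σ)² + t²)). -/

import Mathlib

theorem rpow_gt_ratio (n : ℕ) (hn : 0 < n) (σ t : ℝ) (hσ0 : 0 < σ) (hσ : σ < 1 / 2) :
    (1 + 1 / (2 * (n : ℝ))) ^ (1 - 2 * σ) > (2 * (n : ℝ) + 1 - σ) / (2 * n + σ) ∧
      (2 * (n : ℝ) + 1 - σ) / (2 * n + σ) ≥
        Real.sqrt (((2 * (n : ℝ) + 1 - σ) ^ 2 + t ^ 2) /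
          ((2 * (n : ℝ) + σ) ^ 2 + t ^ 2)) := by
  have hN : (1 : ℝ) ≤ (n : ℝ) := by exact_mod_cast hn
  set N : ℝ := (n : ℝ) with hNdef
  have hb : (0:ℝ) < 2 * N + σ := by linarith
  have ha : (0:ℝ) < 2 * N + 1 - σ := by linarith
  have hba : 2 * N + σ < 2 * N + 1 - σ := by linarith
  constructor
  · -- main rpow inequality
    set L : ℝ := Real.log (1 + 1 / (2 * N)) with hLdef
    set f : ℝ → ℝ := fun x => (1 - 2 * x) * L + Real.log (2 * N + x) - Real.log (2 * N + 1 - x)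
      with hfdef
    set g : ℝ → ℝ := fun x => -2 * L + 1 / (2 * N + x) + 1 / (2 * N + 1 - x) with hgdef
    have hderiv : ∀ x ∈ Set.Ioo (-1 : ℝ) 1, HasDerivAt f (g x) x := by
      intro x hx
      obtain ⟨hx1, hx2⟩ := hx
      have h2 : (0:ℝ) < 2 * N + x := by linarith
      have h3 : (0:ℝ) < 2 * N + 1 - x := by linarith
      have d1 : HasDerivAt (fun x : ℝ => (1 - 2 * x) * L) (-2 * L) x := by
        simpa using ((hasDerivAt_const x (1:ℝ)).sub ((hasDerivAt_id x).const_mul 2)).mul_const L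
      have d2 : HasDerivAt (fun x : ℝ => Real.log (2 * N + x)) (1 / (2 * N + x)) x := by
        have := ((hasDerivAt_id x).const_add (2 * N)).log h2.ne'
        simpa using this
      have d3 : HasDerivAt (fun x : ℝ => Real.log (2 * N + 1 - x)) (-(1 / (2 * N + 1 - x))) x := by
        have := ((hasDerivAt_const x (2 * N + 1)).sub (hasDerivAt_id x)).log h3.ne'
        simpa [neg_div] using this
      have := (d1.add d2).sub d3
      convert this using 1
      · rfl
      · rfl
      · rfl
      simp only [hgdef]
      ring
    have hconc : StrictConcaveOn ℝ (Set.Icc (0:ℝ) (1/2)) f := by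
      apply StrictAntiOn.strictConcaveOn_of_deriv (convex_Icc _ _)
      · intro x hx
        have h2 : (0:ℝ) < 2 * N + x := by have := hx.1; linarith
        have h3 : (0:ℝ) < 2 * N + 1 - x := by have := hx.2; linarith
        apply ContinuousAt.continuousWithinAt
        have := hderiv  -- not needed
        fun_prop (disch := intros; first | exact h2.ne' | exact h3.ne' | positivity)
      · rw [interior_Icc]
        intro x hx y hy hxy
        have hdx : deriv f x = g x :=
          (hderiv x ⟨by linarith [hx.1], by linarith [hx.2]⟩).deriv
        have hdy : deriv f y = g y :=
          (hderiv y ⟨by linarith [hy.1], by linarith [hy.2]⟩).deriv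
        rw [hdx, hdy, hgdef]
        have p1 : (0:ℝ) < 2 * N + x := by linarith [hx.1]
        have p2 : (0:ℝ) < 2 * N + 1 - x := by linarith [hx.2]
        have p3 : (0:ℝ) < 2 * N + y := by linarith [hy.1]
        have p4 : (0:ℝ) < 2 * N + 1 - y := by linarith [hy.2]
        have key : 1 / (2 * N + y) + 1 / (2 * N + 1 - y)
            < 1 / (2 * N + x) + 1 / (2 * N + 1 - x) := by
          rw [div_add_div _ _ p3.ne' p4.ne', div_add_div _ _ p1.ne' p2.ne',
            div_lt_div_iff₀ (by positivity) (by positivity)]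
          have hdiff : (0:ℝ) < (4*N+1) * ((y - x) * (1 - x - y)) := by
            apply mul_pos (by linarith)
            exact mul_pos (by linarith) (by linarith [hx.2, hy.2])
          nlinarith [hdiff]
        dsimp only
        linarith
    have h2N : (0:ℝ) < 2 * N := by linarith
    have hf0 : f 0 = 0 := by
      have : (1 : ℝ) + 1 / (2 * N) = (2 * N + 1) / (2 * N) := by field_simp
      simp only [hfdef, hLdef, this]
      rw [Real.log_div (by linarith) h2N.ne']
      ring
    have hfhalf : f (1/2) = 0 := by
      simp only [hfdef]
      rw [show (2 * N + 1 - 1/2 : ℝ) = 2 * N + 1/2 by ring]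
      ring
    have hfσ : 0 < f σ := by
      have hmem0 : (0:ℝ) ∈ Set.Icc (0:ℝ) (1/2) := by constructor <;> norm_num
      have hmem1 : (1/2:ℝ) ∈ Set.Icc (0:ℝ) (1/2) := by constructor <;> norm_num
      have h := hconc.2 hmem0 hmem1 (by norm_num)
        (show (0:ℝ) < 1 - 2 * σ by linarith) (show (0:ℝ) < 2 * σ by linarith)
        (show (1 - 2 * σ) + 2 * σ = 1 by ring)
      rw [hf0, hfhalf, show (1 - 2 * σ) • (0:ℝ) + (2 * σ) • ((1:ℝ)/2) = σ by
        simp [smul_eq_mul]; ring] at h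
      simpa using h
    have hexp : Real.exp (Real.log (2 * N + 1 - σ) - Real.log (2 * N + σ))
        < Real.exp ((1 - 2 * σ) * L) := by
      apply Real.exp_lt_exp.mpr
      simp only [hfdef] at hfσ
      linarith
    rw [Real.exp_sub, Real.exp_log ha, Real.exp_log hb] at hexp
    have hpos : (0:ℝ) < 1 + 1 / (2 * N) := by positivity
    rw [Real.rpow_def_of_pos hpos]
    rw [hLdef] at hexp
    calc (2 * N + 1 - σ) / (2 * N + σ) < Real.exp ((1 - 2 * σ) * Real.log (1 + 1 / (2 * N))) :=
          hexp
      _ = Real.exp (Real.log (1 + 1 / (2 * N)) * (1 - 2 * σ)) := by ring_nf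
  · -- sqrt part
    have hbt : (0:ℝ) < (2 * N + σ) ^ 2 + t ^ 2 := by positivity
    have key : ((2 * N + 1 - σ) ^ 2 + t ^ 2) / ((2 * N + σ) ^ 2 + t ^ 2)
        ≤ ((2 * N + 1 - σ) / (2 * N + σ)) ^ 2 := by
      rw [div_pow, div_le_div_iff₀ hbt (by positivity)]
      have hsq : (2 * N + σ)^2 ≤ (2 * N + 1 - σ)^2 := by nlinarith
      nlinarith [mul_nonneg (sq_nonneg t) (sub_nonneg.mpr hsq)]
    calc Real.sqrt (((2 * N + 1 - σ) ^ 2 + t ^ 2) / ((2 * N + σ) ^ 2 + t ^ 2))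
        ≤ Real.sqrt (((2 * N + 1 - σ) / (2 * N + σ)) ^ 2) := Real.sqrt_le_sqrt key
      _ = (2 * N + 1 - σ) / (2 * N + σ) := Real.sqrt_sq (by positivity)
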